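/- Let F₁ = ⟨f⟩ be an infinite cyclic subgroup of a free product G = G₁ * ⋯ * Gₙ of n ≥ 1 finite groups each of order > 1. Then F₁ is not verbally closed in G. Specifically, writing f = s₁s₂⋯sₘ as a product of elements of the finite free factors and choosing a prime p larger than all the orders #Gᵢ, the equation x₁^p x₂^p ⋯ xₘ^p = f has a solution in G but its left-hand side evaluated on powers of f is always a p-th power of a power of f, hence never equals f. -/

import Mathlib

/-- A subgroup `H` of `G` is *verbally closed* if every coefficient-free equation
`w(x₁,…,xₙ) = h` with `h ∈ H` that has a solution in `G` also has a solution in `H`. -/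
def VerballyClosed {G : Type*} [Group G] (H : Subgroup G) : Prop :=
  ∀ (n : ℕ) (w : FreeGroup (Fin n)) (h : G), h ∈ H →
    (∃ x : Fin n → G, FreeGroup.lift x w = h) →
    ∃ x : Fin n → G, (∀ i, x i ∈ H) ∧ FreeGroup.lift x w = h

private lemma list_prod_zpow {G : Type*} [Group G] (f : G) (p : ℕ) :
    ∀ l : List G, (∀ a ∈ l, a ∈ Subgroup.zpowers f) →
      ∃ K : ℤ, (l.map fun a => a ^ p).prod = f ^ ((p : ℤ) * K) := by
  intro l
  induction l with
  | nil => exact fun _ => ⟨0, by simp⟩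
  | cons a t ih =>
    intro h
    obtain ⟨k, hk⟩ := Subgroup.mem_zpowers_iff.1 (h a List.mem_cons_self)
    obtain ⟨K, hK⟩ := ih fun b hb => h b (List.mem_cons_of_mem a hb)
    refine ⟨k + K, ?_⟩
    rw [List.map_cons, List.prod_cons, hK, ← hk, ← zpow_natCast (f ^ k) p, ← zpow_mul,
      ← zpow_add]
    congr 1
    ring

/-- An infinite cyclic subgroup of a free product of finitely many nontrivial finite
groups is not verbally closed. -/
theorem zpowers_not_verballyClosed {ι : Type*} [Fintype ι] [Nonempty ι]
    (G : ι → Type*) [∀ i, Group (G i)] [∀ i, Finite (G i)] [∀ i, Nontrivial (G i)]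
    (f : Monoid.CoprodI G) (hf : ¬ IsOfFinOrder f) :
    ¬ VerballyClosed (Subgroup.zpowers f) := by
  -- choose a prime p larger than all the orders
  obtain ⟨p, hple, hp⟩ :=
    Nat.exists_infinite_primes ((Finset.univ.sup fun i => Nat.card (G i)) + 1)
  have hcop : ∀ i, (Nat.card (G i)).Coprime p := by
    intro i
    refine ((hp.coprime_iff_not_dvd.2 fun hdvd => ?_)).symm
    have hpos : 0 < Nat.card (G i) := Nat.card_pos
    have := Nat.le_of_dvd hpos hdvd
    have : Nat.card (G i) ≤ Finset.univ.sup fun i => Nat.card (G i) :=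
      Finset.le_sup (f := fun i => Nat.card (G i)) (Finset.mem_univ i)
    omega
  -- every letter is a p-th power in G
  have hpow : ∀ i (g : G i), ∃ b : Monoid.CoprodI G, b ^ p = Monoid.CoprodI.of g := by
    intro i g
    obtain ⟨h, hh⟩ := (powCoprime (hcop i)).surjective g
    exact ⟨Monoid.CoprodI.of h, by rw [← map_pow]; exact congrArg _ hh⟩
  -- write f as a product of letters
  have hrep : ∀ g : Monoid.CoprodI G, ∃ l : List (Monoid.CoprodI G),
      l.prod = g ∧ ∀ a ∈ l, ∃ b : Monoid.CoprodI G, b ^ p = a := by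
    intro g
    induction g using Monoid.CoprodI.induction_on with
    | one => exact ⟨[], by simp⟩
    | of i g => exact ⟨[Monoid.CoprodI.of g], by simpa using hpow i g⟩
    | mul x y hx hy =>
      obtain ⟨l₁, hl₁, h₁⟩ := hx
      obtain ⟨l₂, hl₂, h₂⟩ := hy
      refine ⟨l₁ ++ l₂, by simp [hl₁, hl₂], fun a ha => ?_⟩
      rcases List.mem_append.1 ha with h | h
      exacts [h₁ a h, h₂ a h]
  obtain ⟨l, hlprod, hl⟩ := hrep f
  set m := l.length with hm
  intro hvc
  -- the word x₀^p ⋯ x_{m-1}^p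
  set w : FreeGroup (Fin m) := (List.ofFn fun j : Fin m => (FreeGroup.of j) ^ p).prod with hw
  have key : ∀ x : Fin m → Monoid.CoprodI G,
      FreeGroup.lift x w = (List.ofFn fun j : Fin m => (x j) ^ p).prod := by
    intro x
    rw [hw, map_list_prod]
    congr 1
    simp [List.map_ofFn, Function.comp_def]
  -- solution in G
  have hsol : ∃ x : Fin m → Monoid.CoprodI G, FreeGroup.lift x w = f := by
    choose b hb using fun j : Fin m => hl (l.get j) (l.get_mem j)
    refine ⟨b, ?_⟩
    rw [key, ← hlprod]
    congr 1
    exact List.ext_get (by simp [hm]) (by simp [hb])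
  obtain ⟨x, hxH, hxw⟩ := hvc m w f (Subgroup.mem_zpowers f) hsol
  rw [key] at hxw
  have : (List.ofFn fun j : Fin m => x j) = (List.ofFn fun j : Fin m => x j) := rfl
  obtain ⟨K, hK⟩ := list_prod_zpow f p (List.ofFn fun j : Fin m => x j)
    (by intro a ha; obtain ⟨j, rfl⟩ := List.mem_ofFn.1 ha; exact hxH j)
  rw [List.map_ofFn] at hK
  have hfeq : f ^ ((p : ℤ) * K) = f ^ (1 : ℤ) := by
    rw [← hK, zpow_one, ← hxw]; rfl
  have hinj := injective_zpow_iff_not_isOfFinOrder.2 hf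
  have h1 : (p : ℤ) * K = 1 := hinj hfeq
  have : (p : ℤ) ∣ 1 := ⟨K, h1.symm⟩
  have := Int.le_of_dvd one_pos this
  have := hp.two_le
  omega
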